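/- Let H be a real Hilbert space, K a nonempty convex subset of H, g : H → H a map, μ > 0, and F : H → ℝ Fréchet differentiable and strongly exponentially general convex with respect to g, i.e. exp(F(g u + t·(g v − g u))) ≤ (1−t)·exp(F(g u)) + t·exp(F(g v)) − μ·t·(1−t)·‖g v − g u‖² for all u, v with g u, g v ∈ K and all t ∈ [0,1]. Then ⟨exp(F(g u))·∇F(g u) − exp(F(g v))·∇F(g v), g u − g v⟩ ≥ 2μ·‖g v − g u‖² for all u, v ∈ H with g u, g v ∈ K. -/

import Mathlib

open scoped RealInnerProductSpace

/-- If φ has derivative φ'0 at 0 and φ(t) ≤ φ(0) + t*a - μ*t*(1-t)*b on (0,1],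
then φ'0 ≤ a - μ*b. -/
lemma aux_deriv_le {φ : ℝ → ℝ} {φ'0 a μ b : ℝ}
    (hd : HasDerivAt φ φ'0 0)
    (h : ∀ t ∈ Set.Ioc (0:ℝ) 1, φ t ≤ φ 0 + t * a - μ * (t * (1 - t)) * b) :
    φ'0 ≤ a - μ * b := by
  have hslope : Filter.Tendsto (fun t => (φ t - φ 0) / t) (nhdsWithin 0 (Set.Ioc (0:ℝ) 1))
      (nhds φ'0) := by
    have := hd.tendsto_slope_zero
    have hsub : nhdsWithin (0:ℝ) (Set.Ioc 0 1) ≤ nhdsWithin 0 {0}ᶜ := by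
      apply nhdsWithin_mono
      intro x hx; exact ne_of_gt hx.1
    have h' := this.mono_left hsub
    simpa [smul_eq_mul, div_eq_inv_mul, zero_add] using h'
  have hbound : Filter.Tendsto (fun t : ℝ => a - μ * (1 - t) * b)
      (nhdsWithin 0 (Set.Ioc (0:ℝ) 1)) (nhds (a - μ * b)) := by
    have : Filter.Tendsto (fun t : ℝ => a - μ * (1 - t) * b) (nhds 0) (nhds (a - μ * (1 - 0) * b)) :=
      Continuous.tendsto (by continuity) 0
    simpa using this.mono_left nhdsWithin_le_nhds
  have hne : (nhdsWithin (0:ℝ) (Set.Ioc 0 1)).NeBot := by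
    rw [nhdsWithin_Ioc_eq_nhdsGT (by norm_num : (0:ℝ) < 1)]
    exact nhdsGT_neBot 0
  refine le_of_tendsto_of_tendsto hslope hbound ?_
  filter_upwards [self_mem_nhdsWithin] with t ht
  have ht0 : 0 < t := ht.1
  have := h t ht
  rw [div_le_iff₀ ht0]
  ring_nf
  nlinarith [this]

theorem stmt_17 {H : Type*} [NormedAddCommGroup H] [InnerProductSpace ℝ H] [CompleteSpace H]
    (K : Set H) (hK : K.Nonempty) (hKconv : Convex ℝ K)
    (g : H → H) (μ : ℝ) (hμ : 0 < μ)
    (F : H → ℝ) (F' : H → H) (hF : ∀ x : H, HasGradientAt F (F' x) x)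
    (hconv : ∀ u v : H, g u ∈ K → g v ∈ K → ∀ t ∈ Set.Icc (0 : ℝ) 1,
      Real.exp (F (g u + t • (g v - g u))) ≤
        (1 - t) * Real.exp (F (g u)) + t * Real.exp (F (g v))
          - μ * (t * (1 - t)) * ‖g v - g u‖ ^ 2) :
    ∀ u v : H, g u ∈ K → g v ∈ K →
      2 * μ * ‖g v - g u‖ ^ 2 ≤
        ⟪Real.exp (F (g u)) • F' (g u) - Real.exp (F (g v)) • F' (g v), g u - g v⟫ := by
  -- gradient of G = exp ∘ F
  set G : H → ℝ := fun x => Real.exp (F x) with hG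
  have hGgrad : ∀ x : H, HasGradientAt G (Real.exp (F x) • F' x) x := by
    intro x
    have h1 : HasFDerivAt F (InnerProductSpace.toDual ℝ H (F' x)) x :=
      (hF x).hasFDerivAt
    have h2 : HasDerivAt Real.exp (Real.exp (F x)) (F x) := Real.hasDerivAt_exp (F x)
    have h3 : HasFDerivAt G (Real.exp (F x) • (InnerProductSpace.toDual ℝ H (F' x))) x :=
      h2.comp_hasFDerivAt x h1
    have : (InnerProductSpace.toDual ℝ H) (Real.exp (F x) • F' x)
        = Real.exp (F x) • (InnerProductSpace.toDual ℝ H (F' x)) := by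
      simp
    rw [hasGradientAt_iff_hasFDerivAt, this]
    exact h3
  -- key inequality
  have key : ∀ u v : H, g u ∈ K → g v ∈ K →
      ⟪Real.exp (F (g u)) • F' (g u), g v - g u⟫ ≤
        G (g v) - G (g u) - μ * ‖g v - g u‖ ^ 2 := by
    intro u v hu hv
    set d := g v - g u with hd
    have hline : HasDerivAt (fun t : ℝ => g u + t • d) d 0 := by
      simpa using ((hasDerivAt_id (0:ℝ)).smul_const d).const_add (g u)
    have hφ : HasDerivAt (fun t : ℝ => G (g u + t • d))
        (⟪Real.exp (F (g u)) • F' (g u), d⟫) 0 := by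
      have hfd : HasFDerivAt G
          ((InnerProductSpace.toDual ℝ H) (Real.exp (F (g u)) • F' (g u)))
          (g u + (0:ℝ) • d) := by
        simpa using (hGgrad (g u)).hasFDerivAt
      have := hfd.comp_hasDerivAt 0 hline
      simpa [InnerProductSpace.toDual_apply_apply, Function.comp_def, real_inner_smul_left] using this
    have hineq : ∀ t ∈ Set.Ioc (0:ℝ) 1,
        G (g u + t • d) ≤ G (g u + (0:ℝ) • d) + t * (G (g v) - G (g u))
          - μ * (t * (1 - t)) * ‖d‖ ^ 2 := by
      intro t ht
      have := hconv u v hu hv t ⟨le_of_lt ht.1, ht.2⟩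
      simp only [zero_smul, add_zero]
      calc G (g u + t • d) ≤ (1 - t) * G (g u) + t * G (g v) - μ * (t * (1-t)) * ‖d‖^2 := this
        _ = G (g u) + t * (G (g v) - G (g u)) - μ * (t * (1-t)) * ‖d‖^2 := by ring
    have := aux_deriv_le hφ hineq
    calc ⟪Real.exp (F (g u)) • F' (g u), d⟫ ≤ (G (g v) - G (g u)) - μ * ‖d‖^2 := this
      _ = G (g v) - G (g u) - μ * ‖d‖ ^ 2 := by ring
  intro u v hu hv
  have h1 := key u v hu hv
  have h2 := key v u hv hu
  rw [norm_sub_rev] at h2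
  simp only [inner_sub_left, inner_sub_right] at h1 h2 ⊢
  linarith
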